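/- In the last-passage limit q' = 0, the function f(q_b) = s₁·q/(q - q_b) + s₂·q_b/(q_b - 1) on (q,1) attains its maximum value (s₁ q + 2√(s₁ q) + q)/(q-1) at q_b* = (q + √(s₁ q))/(1 + √(s₁ q)) when s₂ = 1, and this maximum lies in (q,1). -/

import Mathlib

open Set

/-- In the last-passage limit `q' = 0` (and `s₂ = 1`), the function
`f(q_b) = s₁ q/(q - q_b) + q_b/(q_b - 1)` on `(q,1)` attains its maximum at
`q_b* = (q + √(s₁ q))/(1 + √(s₁ q)) ∈ (q,1)`, with maximum value
`(s₁ q + 2√(s₁ q) + q)/(q-1)` (Johansson's formula). -/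
theorem BG_LPP_limit_free_energy (q s1 : ℝ) (h0q : 0 < q) (hq1 : q < 1) (hs1 : 0 < s1) :
    (q + Real.sqrt (s1 * q)) / (1 + Real.sqrt (s1 * q)) ∈ Ioo q 1 ∧
    IsMaxOn (fun x => s1 * q / (q - x) + x / (x - 1)) (Ioo q 1)
      ((q + Real.sqrt (s1 * q)) / (1 + Real.sqrt (s1 * q))) ∧
    s1 * q / (q - (q + Real.sqrt (s1 * q)) / (1 + Real.sqrt (s1 * q)))
      + ((q + Real.sqrt (s1 * q)) / (1 + Real.sqrt (s1 * q)))
          / ((q + Real.sqrt (s1 * q)) / (1 + Real.sqrt (s1 * q)) - 1)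
      = (s1 * q + 2 * Real.sqrt (s1 * q) + q) / (q - 1) := by
  set s := Real.sqrt (s1 * q) with hs_def
  have hsq : s ^ 2 = s1 * q := Real.sq_sqrt (by positivity)
  have hs : 0 < s := Real.sqrt_pos.mpr (by positivity)
  have h1s : 0 < 1 + s := by linarith
  have hmem : (q + s) / (1 + s) ∈ Ioo q 1 := by
    constructor
    · rw [lt_div_iff₀ h1s]; nlinarith
    · rw [div_lt_one h1s]; linarith
  have hC : q - (q + s) / (1 + s) = (q - 1) * s / (1 + s) := by
    field_simp; ring
  have hD : (q + s) / (1 + s) - 1 = (q - 1) / (1 + s) := by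
    field_simp
    ring
  have hq1' : q - 1 ≠ 0 := by linarith
  have hval : s1 * q / (q - (q + s) / (1 + s)) + ((q + s) / (1 + s)) / ((q + s) / (1 + s) - 1)
      = (s1 * q + 2 * s + q) / (q - 1) := by
    rw [hC, hD, ← hsq]
    field_simp
    ring
  refine ⟨hmem, ?_, hval⟩
  intro x hx
  simp only [mem_setOf_eq]
  obtain ⟨hxq, hx1⟩ := hx
  rw [hval]
  have hA : 0 < x - q := by linarith
  have hB : 0 < 1 - x := by linarith
  have e1 : s1 * q / (q - x) = -(s ^ 2 / (x - q)) := by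
    rw [hsq, show q - x = -(x - q) by ring, div_neg]
  have e2 : x / (x - 1) = -(x / (1 - x)) := by
    rw [show x - 1 = -(1 - x) by ring, div_neg]
  have e3 : (s1 * q + 2 * s + q) / (q - 1) = -((s ^ 2 + 2 * s + q) / (1 - q)) := by
    rw [hsq, show q - 1 = -(1 - q) by ring, div_neg]
  rw [e1, e2, e3]
  have key : (s ^ 2 + 2 * s + q) / (1 - q) ≤ s ^ 2 / (x - q) + x / (1 - x) := by
    rw [div_add_div _ _ (ne_of_gt hA) (ne_of_gt hB),
      div_le_div_iff₀ (by linarith) (by positivity)]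
    nlinarith [sq_nonneg (s * (1 - x) - (x - q))]
  linarith
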